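/- Let U : ℝ → ℝ^{N×r} and Z : ℝ → ℝ^{p×r} be differentiable matrix-valued functions, and set Y(t) = U(t) Z(t)ᵀ and C(t) = Z(t)ᵀ Z(t). Assume that for all t: U(t)ᵀ U(t) = I_r (orthonormal columns), U(t)ᵀ U'(t) = 0 (gauge condition), and C(t) is invertible. Then for all t: U'(t) = (I_N − U(t)U(t)ᵀ) Y'(t) Z(t) C(t)⁻¹ and Z'(t) = Y'(t)ᵀ U(t). -/

import Mathlib

open Matrix

/-- The DLRA factor equations: if `Y = UZᵀ` with `UᵀU = I`, the gauge
condition `UᵀU' = 0`, and `C = ZᵀZ` invertible, then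
`U' = (I − UUᵀ) Y' Z C⁻¹` and `Z' = Y'ᵀ U`. -/
theorem dlra_factor_equations {N r p : ℕ}
    (U U' : ℝ → Matrix (Fin N) (Fin r) ℝ)
    (Z Z' : ℝ → Matrix (Fin p) (Fin r) ℝ)
    (Y' : ℝ → Matrix (Fin N) (Fin p) ℝ)
    (hU : ∀ (t : ℝ) (i : Fin N) (j : Fin r), HasDerivAt (fun s => U s i j) (U' t i j) t)
    (hZ : ∀ (t : ℝ) (i : Fin p) (j : Fin r), HasDerivAt (fun s => Z s i j) (Z' t i j) t)
    (hY : ∀ (t : ℝ) (i : Fin N) (j : Fin p),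
      HasDerivAt (fun s => (U s * (Z s)ᵀ) i j) (Y' t i j) t)
    (horth : ∀ t : ℝ, (U t)ᵀ * U t = 1)
    (hgauge : ∀ t : ℝ, (U t)ᵀ * U' t = 0)
    (hC : ∀ t : ℝ, IsUnit ((Z t)ᵀ * Z t)) :
    ∀ t : ℝ,
      U' t = (1 - U t * (U t)ᵀ) * Y' t * Z t * ((Z t)ᵀ * Z t)⁻¹ ∧
      Z' t = (Y' t)ᵀ * U t := by
  intro t
  -- Product rule: Y' = U' Zᵀ + U Z'ᵀ
  have hprod : Y' t = U' t * (Z t)ᵀ + U t * (Z' t)ᵀ := by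
    ext i j
    have h1 : HasDerivAt (fun s => (U s * (Z s)ᵀ) i j)
        ((U' t * (Z t)ᵀ + U t * (Z' t)ᵀ) i j) t := by
      have : ∀ s, (U s * (Z s)ᵀ) i j = ∑ k, U s i k * Z s j k := by
        intro s; simp [Matrix.mul_apply, Matrix.transpose_apply]
      simp only [this, Matrix.add_apply, Matrix.mul_apply, Matrix.transpose_apply]
      rw [← Finset.sum_add_distrib]
      exact HasDerivAt.fun_sum fun k _ => (hU t i k).mul (hZ t j k)
    exact ((hY t i j).unique h1)
  have hCinv := (Matrix.isUnit_iff_isUnit_det _).mp (hC t)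
  constructor
  · have key : (1 - U t * (U t)ᵀ) * Y' t * Z t = U' t * ((Z t)ᵀ * Z t) := by
      rw [hprod]
      have e1 : (U t)ᵀ * (U' t * (Z t)ᵀ + U t * (Z' t)ᵀ)
          = (Z' t)ᵀ := by
        rw [Matrix.mul_add, ← Matrix.mul_assoc, ← Matrix.mul_assoc, hgauge, horth,
          Matrix.zero_mul, Matrix.one_mul, zero_add]
      calc (1 - U t * (U t)ᵀ) * (U' t * (Z t)ᵀ + U t * (Z' t)ᵀ) * Z t
          = ((U' t * (Z t)ᵀ + U t * (Z' t)ᵀ)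
            - U t * ((U t)ᵀ * (U' t * (Z t)ᵀ + U t * (Z' t)ᵀ))) * Z t := by
            rw [Matrix.sub_mul, Matrix.one_mul, Matrix.mul_assoc]
        _ = (U' t * (Z t)ᵀ) * Z t := by
            rw [e1]; congr 1; abel
        _ = U' t * ((Z t)ᵀ * Z t) := by rw [Matrix.mul_assoc]
    rw [key, Matrix.mul_assoc, Matrix.mul_nonsing_inv _ hCinv, Matrix.mul_one]
  · rw [hprod]
    have : (U' t * (Z t)ᵀ + U t * (Z' t)ᵀ)ᵀ * U t
        = Z t * ((U' t)ᵀ * U t) + Z' t * ((U t)ᵀ * U t) := by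
      simp [Matrix.transpose_add, Matrix.transpose_mul, Matrix.add_mul, Matrix.mul_assoc]
    rw [this, horth, Matrix.mul_one]
    have : (U' t)ᵀ * U t = 0 := by
      have := congrArg Matrix.transpose (hgauge t)
      simpa [Matrix.transpose_mul] using this
    rw [this, Matrix.mul_zero, zero_add]
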